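/- arXiv:2509.06138 — 3 statements merged into one kernel-verified Lean document; each statement's English description precedes it below -/
import Mathlib

section
/- For 1 < p < N_γ, p ≠ N_γ, the function Γ_p(z) = d(z)^{(p−N_γ)/(p−1)} satisfies Δ_{γ,p} Γ_p = 0 pointwise on ℝ^N ∖ {0}, where d is the Grushin gauge. -/
open MeasureTheory Real Filter Topology

noncomputable section

abbrev Esp (k : ℕ) := EuclideanSpace ℝ (Fin k)

def ggauge (γ : ℝ) {m n : ℕ} (z : Esp m × Esp n) : ℝ :=
  (‖z.1‖ ^ (2 * (γ + 1)) + (γ + 1) ^ 2 * ‖z.2‖ ^ 2) ^ (1 / (2 * (γ + 1)))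

def dil (γ ρ : ℝ) {m n : ℕ} (z : Esp m × Esp n) : Esp m × Esp n :=
  (ρ • z.1, (ρ ^ (γ + 1)) • z.2)

def toE {ι : Type*} (f : ι → ℝ) : EuclideanSpace ℝ ι := WithLp.toLp 2 f

def Xop (γ : ℝ) {m n : ℕ} (i : Fin m ⊕ Fin n) (f : Esp m × Esp n → ℝ)
    (z : Esp m × Esp n) : ℝ :=
  match i with
  | Sum.inl i => fderiv ℝ f z (EuclideanSpace.single i 1, 0)
  | Sum.inr j => ‖z.1‖ ^ γ * fderiv ℝ f z (0, EuclideanSpace.single j 1)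

def ggrad (γ : ℝ) {m n : ℕ} (u : Esp m × Esp n → ℝ) (z : Esp m × Esp n) :
    EuclideanSpace ℝ (Fin m ⊕ Fin n) :=
  toE fun i => Xop γ i u z

def pLap (γ p : ℝ) {m n : ℕ} (u : Esp m × Esp n → ℝ) (z : Esp m × Esp n) : ℝ :=
  ∑ i : Fin m ⊕ Fin n, Xop γ i (fun w => ‖ggrad γ u w‖ ^ (p - 2) * Xop γ i u w) z


namespace PFaux
variable {m n : ℕ}
def fstL (m n : ℕ) : (Esp m × Esp n) →L[ℝ] Esp m := ContinuousLinearMap.fst ℝ _ _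
def sndL (m n : ℕ) : (Esp m × Esp n) →L[ℝ] Esp n := ContinuousLinearMap.snd ℝ _ _
def qx (w : Esp m × Esp n) : ℝ := ‖w.1‖ ^ 2
def qy (w : Esp m × Esp n) : ℝ := ‖w.2‖ ^ 2
def sf (γ : ℝ) (w : Esp m × Esp n) : ℝ := qx w ^ (γ + 1) + (γ + 1) ^ 2 * qy w
def Dqx (z : Esp m × Esp n) : (Esp m × Esp n) →L[ℝ] ℝ := 2 • (innerSL ℝ z.1).comp (fstL m n)
def Dqy (z : Esp m × Esp n) : (Esp m × Esp n) →L[ℝ] ℝ := 2 • (innerSL ℝ z.2).comp (sndL m n)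
def DS (γ : ℝ) (z : Esp m × Esp n) : (Esp m × Esp n) →L[ℝ] ℝ :=
  ((γ + 1) * qx z ^ γ) • Dqx z + ((γ + 1) ^ 2 : ℝ) • Dqy z
lemma hasFDerivAt_qx (z : Esp m × Esp n) : HasFDerivAt qx (Dqx z) z :=
  ((fstL m n).hasFDerivAt (x := z)).norm_sq
lemma hasFDerivAt_qy (z : Esp m × Esp n) : HasFDerivAt qy (Dqy z) z :=
  ((sndL m n).hasFDerivAt (x := z)).norm_sq
lemma hasFDerivAt_sf {γ : ℝ} (hγ : 0 ≤ γ) (z : Esp m × Esp n) :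
    HasFDerivAt (sf γ) (DS γ z) z := by
  have h1 : HasFDerivAt (fun w : Esp m × Esp n => qx w ^ (γ + 1))
      (((γ + 1) * qx z ^ γ) • Dqx z) z := by
    have := (hasFDerivAt_qx z).rpow_const (p := γ + 1) (Or.inr (by linarith))
    simpa using this
  exact h1.add ((hasFDerivAt_qy z).const_mul _)
@[simp] lemma Dqx_inl (z : Esp m × Esp n) (i : Fin m) :
    Dqx z (EuclideanSpace.single i 1, (0 : Esp n)) = 2 * z.1 i := by
  simp [Dqx, fstL, EuclideanSpace.inner_single_right]
@[simp] lemma Dqx_inr (z : Esp m × Esp n) (j : Fin n) :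
    Dqx z ((0 : Esp m), EuclideanSpace.single j 1) = 0 := by
  simp [Dqx, fstL]
@[simp] lemma Dqy_inl (z : Esp m × Esp n) (i : Fin m) :
    Dqy z (EuclideanSpace.single i 1, (0 : Esp n)) = 0 := by
  simp [Dqy, sndL]
@[simp] lemma Dqy_inr (z : Esp m × Esp n) (j : Fin n) :
    Dqy z ((0 : Esp m), EuclideanSpace.single j 1) = 2 * z.2 j := by
  simp [Dqy, sndL, EuclideanSpace.inner_single_right]
lemma qx_nonneg (w : Esp m × Esp n) : 0 ≤ qx w := sq_nonneg _
lemma qy_nonneg (w : Esp m × Esp n) : 0 ≤ qy w := sq_nonneg _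
lemma sf_nonneg {γ : ℝ} (hγ : 0 < γ) (w : Esp m × Esp n) : 0 ≤ sf γ w := by
  have h1 := rpow_nonneg (qx_nonneg w) (γ + 1)
  have h2 : (0:ℝ) ≤ (γ + 1) ^ 2 * qy w := mul_nonneg (sq_nonneg _) (qy_nonneg w)
  unfold sf; linarith
lemma sf_pos {γ : ℝ} (hγ : 0 < γ) {w : Esp m × Esp n} (hw : w ≠ 0) : 0 < sf γ w := by
  rcases eq_or_ne w.1 0 with h1 | h1
  · have h2 : w.2 ≠ 0 := fun h2 => hw (Prod.ext h1 h2)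
    have h3 : 0 < qy w := by
      have h4 := norm_pos_iff.mpr h2
      unfold qy; positivity
    have h5 : 0 < (γ + 1) ^ 2 * qy w := by positivity
    have h6 : 0 ≤ qx w ^ (γ + 1) := rpow_nonneg (qx_nonneg w) _
    unfold sf; linarith
  · have h3 : 0 < qx w := by
      have h4 := norm_pos_iff.mpr h1
      unfold qx; positivity
    have h4 : 0 < qx w ^ (γ + 1) := rpow_pos_of_pos h3 _
    have h5 : 0 ≤ (γ + 1) ^ 2 * qy w := mul_nonneg (sq_nonneg _) (qy_nonneg w)
    unfold sf; linarith

section XopForm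
variable {γ b : ℝ}

lemma hasFDerivAt_pow_sf (hγ : 0 < γ) {w : Esp m × Esp n} (hw : w ≠ 0) (b : ℝ) :
    HasFDerivAt (fun w => sf γ w ^ b) ((b * sf γ w ^ (b - 1)) • DS γ w) w :=
  (hasFDerivAt_sf hγ.le w).rpow_const (Or.inl (sf_pos hγ hw).ne')

lemma norm_sq_x (hγ : 0 < γ) (w : Esp m × Esp n) : ‖w.1‖ ^ γ = qx w ^ (γ / 2) := by
  rw [show qx w = ‖w.1‖ ^ ((2:ℕ):ℝ) by rw [Real.rpow_natCast]; rfl,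
    ← Real.rpow_mul (norm_nonneg _)]
  congr 1; push_cast; ring

lemma Xop_inl (hγ : 0 < γ) (i : Fin m) {w : Esp m × Esp n} (hw : w ≠ 0) :
    Xop γ (Sum.inl i) (fun w => sf γ w ^ b) w =
      (2 * (γ + 1) * b) * sf γ w ^ (b - 1) * qx w ^ γ * w.1 i := by
  show fderiv ℝ _ w _ = _
  rw [(hasFDerivAt_pow_sf hγ hw b).fderiv]
  simp [DS]
  ring

lemma Xop_inr (hγ : 0 < γ) (j : Fin n) {w : Esp m × Esp n} (hw : w ≠ 0) :
    Xop γ (Sum.inr j) (fun w => sf γ w ^ b) w =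
      (2 * (γ + 1) ^ 2 * b) * sf γ w ^ (b - 1) * qx w ^ (γ / 2) * w.2 j := by
  show ‖w.1‖ ^ γ * fderiv ℝ _ w _ = _
  rw [(hasFDerivAt_pow_sf hγ hw b).fderiv, norm_sq_x hγ]
  simp [DS]
  ring


end XopForm

lemma sum_sq_x (x : Esp m) : ∑ i, x i ^ 2 = ‖x‖ ^ 2 := by
  rw [EuclideanSpace.norm_eq, Real.sq_sqrt (by positivity)]
  simp [sq_abs]

lemma sq_rpow {x : ℝ} (hx : 0 ≤ x) (c : ℝ) : (x ^ c) ^ 2 = x ^ (2 * c) := by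
  rw [← Real.rpow_natCast (x ^ c) 2, ← Real.rpow_mul hx]
  congr 1; push_cast; ring

lemma norm_ggrad {γ b : ℝ} (hγ : 0 < γ) {w : Esp m × Esp n} (hw : w ≠ 0) :
    ‖ggrad γ (fun w => sf γ w ^ b) w‖ =
      |2 * (γ + 1) * b| * sf γ w ^ (b - 1/2) * qx w ^ (γ / 2) := by
  set A := 2 * (γ + 1) * b with hA
  set s := sf γ w with hs
  set q := qx w with hq
  have hs0 : 0 < s := sf_pos hγ hw
  have hq0 : 0 ≤ q := qx_nonneg w
  have h2 : (q ^ (γ/2) : ℝ)^2 = q ^ γ := by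
    rw [sq_rpow hq0]; congr 1; ring
  have hq1 : q ^ γ * q = q ^ (γ + 1) := by
    rw [Real.rpow_add' hq0 (by positivity), Real.rpow_one]
  have hss : q ^ (γ + 1) + (γ+1)^2 * qy w = s := rfl
  have h3 : ((s ^ (b-1) : ℝ))^2 * s = s ^ (2*b-1) := by
    rw [sq_rpow hs0.le, ← Real.rpow_add_one hs0.ne']; congr 1; ring
  have hs4 : ((s ^ (b-1/2) : ℝ))^2 = s ^ (2*b-1) := by
    rw [sq_rpow hs0.le]; congr 1; ring
  have key1 : ∑ i : Fin m ⊕ Fin n, ‖(ggrad γ (fun w => sf γ w ^ b) w) i‖ ^ 2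
      = A^2 * s ^ (2*b-1) * q ^ γ := by
    have hcoord : ∀ i, (ggrad γ (fun w => sf γ w ^ b) w) i
        = Xop γ i (fun w => sf γ w ^ b) w := fun i => rfl
    rw [Fintype.sum_sum_type]
    simp only [hcoord, Xop_inl hγ _ hw, Xop_inr hγ _ hw, Real.norm_eq_abs, sq_abs]
    have e1 : ∀ i : Fin m, (A * s ^ (b - 1) * q ^ γ * w.1 i) ^ 2
        = (A * s ^ (b-1) * q ^ γ)^2 * (w.1 i)^2 := fun i => by ring
    have e2 : ∀ j : Fin n, (2 * (γ+1)^2 * b * s ^ (b - 1) * q ^ (γ/2) * w.2 j) ^ 2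
        = ((γ+1) * A * s ^ (b-1) * q ^ (γ/2))^2 * (w.2 j)^2 := fun j => by rw [hA]; ring
    simp only [← hA, ← hs, ← hq]
    simp only [e1, e2, ← Finset.mul_sum]
    rw [sum_sq_x, sum_sq_x]
    have hqx : ‖w.1‖ ^ 2 = q := rfl
    have hqy : ‖w.2‖ ^ 2 = qy w := rfl
    rw [hqx, hqy]
    linear_combination (A^2*(s^(b-1))^2*(γ+1)^2*(qy w))*h2
      + (A^2*(s^(b-1))^2*(q^γ))*hq1 + (A^2*(s^(b-1))^2*(q^γ))*hss + (A^2*(q^γ))*h3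
  have key2 : (|A| * s ^ (b - 1/2) * q ^ (γ / 2)) ^ 2 = A^2 * s ^ (2*b-1) * q ^ γ := by
    linear_combination ((s^(b-1/2))^2*(q^(γ/2))^2)*(sq_abs A)
      + (A^2*(q^(γ/2))^2)*hs4 + (A^2*(s^(2*b-1)))*h2
  have key := key1.trans key2.symm
  rw [EuclideanSpace.norm_eq, key, Real.sqrt_sq (by positivity)]

lemma flux_inl {γ b r : ℝ} (hγ : 0 < γ) (he : γ * r / 2 + γ ≠ 0) (i : Fin m)
    {w : Esp m × Esp n} (hw : w ≠ 0) :
    ‖ggrad γ (fun w => sf γ w ^ b) w‖ ^ r * Xop γ (Sum.inl i) (fun w => sf γ w ^ b) w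
      = (|2 * (γ + 1) * b| ^ r * (2 * (γ + 1) * b)) *
        sf γ w ^ ((b - 1/2) * r + (b - 1)) * qx w ^ (γ * r / 2 + γ) * w.1 i := by
  set A := 2 * (γ + 1) * b with hA
  have hs0 : 0 < sf γ w := sf_pos hγ hw
  have hq0 : 0 ≤ qx w := qx_nonneg w
  rw [norm_ggrad hγ hw, Xop_inl hγ i hw]
  rw [Real.mul_rpow (by positivity) (by positivity),
    Real.mul_rpow (abs_nonneg _) (by positivity),
    ← Real.rpow_mul hs0.le, ← Real.rpow_mul hq0]
  rw [show ((b - 1/2) * r + (b - 1)) = ((b-1/2)*r) + (b-1) from rfl,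
    Real.rpow_add hs0,
    show γ * r / 2 + γ = γ / 2 * r + γ by ring,
    Real.rpow_add' hq0 (by rw [show γ / 2 * r + γ = γ * r / 2 + γ by ring]; exact he)]
  ring

lemma flux_inr {γ b r : ℝ} (hγ : 0 < γ) (he : γ * r / 2 + γ / 2 ≠ 0) (j : Fin n)
    {w : Esp m × Esp n} (hw : w ≠ 0) :
    ‖ggrad γ (fun w => sf γ w ^ b) w‖ ^ r * Xop γ (Sum.inr j) (fun w => sf γ w ^ b) w
      = (|2 * (γ + 1) * b| ^ r * (2 * (γ + 1) * b)) * (γ + 1) *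
        sf γ w ^ ((b - 1/2) * r + (b - 1)) * qx w ^ (γ * r / 2 + γ / 2) * w.2 j := by
  set A := 2 * (γ + 1) * b with hA
  have hs0 : 0 < sf γ w := sf_pos hγ hw
  have hq0 : 0 ≤ qx w := qx_nonneg w
  rw [norm_ggrad hγ hw, Xop_inr hγ j hw]
  rw [Real.mul_rpow (by positivity) (by positivity),
    Real.mul_rpow (abs_nonneg _) (by positivity),
    ← Real.rpow_mul hs0.le, ← Real.rpow_mul hq0]
  rw [Real.rpow_add hs0 ((b-1/2)*r) (b-1),
    show γ * r / 2 + γ / 2 = γ / 2 * r + γ / 2 by ring,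
    Real.rpow_add' hq0 (by rw [show γ / 2 * r + γ / 2 = γ * r / 2 + γ / 2 by ring]; exact he)]
  ring


def PxL (m n : ℕ) (i : Fin m) : (Esp m × Esp n) →L[ℝ] ℝ :=
  (EuclideanSpace.proj i).comp (fstL m n)
def PyL (m n : ℕ) (j : Fin n) : (Esp m × Esp n) →L[ℝ] ℝ :=
  (EuclideanSpace.proj j).comp (sndL m n)

lemma hasFDerivAt_coordx (i : Fin m) (z : Esp m × Esp n) :
    HasFDerivAt (fun w : Esp m × Esp n => w.1 i) (PxL m n i) z :=
  (PxL m n i).hasFDerivAt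

lemma hasFDerivAt_coordy (j : Fin n) (z : Esp m × Esp n) :
    HasFDerivAt (fun w : Esp m × Esp n => w.2 j) (PyL m n j) z :=
  (PyL m n j).hasFDerivAt

@[simp] lemma PxL_inl (i i' : Fin m) :
    PxL m n i (EuclideanSpace.single i' 1, (0 : Esp n)) = if i' = i then 1 else 0 := by
  simp [PxL, fstL, EuclideanSpace.single_apply, eq_comm]

@[simp] lemma PyL_inr (j j' : Fin n) :
    PyL m n j ((0 : Esp m), EuclideanSpace.single j' 1) = if j' = j then 1 else 0 := by
  simp [PyL, sndL, EuclideanSpace.single_apply, eq_comm]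

/-- Case `z.1 ≠ 0`: directional derivative of the flux closed form, `x`-direction. -/
lemma fderiv_flux_inl {γ c a e : ℝ} (hγ : 0 < γ) (i : Fin m)
    {z : Esp m × Esp n} (hz : z ≠ 0) (hz1 : z.1 ≠ 0) :
    fderiv ℝ (fun w => c * (sf γ w ^ a * (qx w ^ e * w.1 i))) z
        (EuclideanSpace.single i 1, 0)
      = c * (sf γ z ^ a * qx z ^ e
          + (z.1 i)^2 * (2 * e * sf γ z ^ a * qx z ^ (e-1)
            + 2 * a * (γ+1) * sf γ z ^ (a-1) * qx z ^ e * qx z ^ γ)) := by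
  have hq0 : 0 < qx z := by
    have := norm_pos_iff.mpr hz1; unfold qx; positivity
  have hsa := hasFDerivAt_pow_sf hγ hz a
  have hqe : HasFDerivAt (fun w : Esp m × Esp n => qx w ^ e)
      ((e * qx z ^ (e - 1)) • Dqx z) z :=
    (hasFDerivAt_qx z).rpow_const (Or.inl hq0.ne')
  have hH := ((hsa.mul (hqe.mul (hasFDerivAt_coordx i z))).const_mul c)
  rw [show fderiv ℝ (fun w : Esp m × Esp n => c * (sf γ w ^ a * (qx w ^ e * w.1 i))) z = _ from hH.fderiv]
  simp [DS]
  ring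

/-- Case `z.1 ≠ 0`: directional derivative of the flux closed form, `y`-direction. -/
lemma fderiv_flux_inr {γ c a e : ℝ} (hγ : 0 < γ) (j : Fin n)
    {z : Esp m × Esp n} (hz : z ≠ 0) (hz1 : z.1 ≠ 0) :
    fderiv ℝ (fun w => c * (sf γ w ^ a * (qx w ^ e * w.2 j))) z
        (0, EuclideanSpace.single j 1)
      = c * (sf γ z ^ a * qx z ^ e
          + (z.2 j)^2 * (2 * a * (γ+1)^2 * sf γ z ^ (a-1) * qx z ^ e)) := by
  have hq0 : 0 < qx z := by
    have := norm_pos_iff.mpr hz1; unfold qx; positivity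
  have hsa := hasFDerivAt_pow_sf hγ hz a
  have hqe : HasFDerivAt (fun w : Esp m × Esp n => qx w ^ e)
      ((e * qx z ^ (e - 1)) • Dqx z) z :=
    (hasFDerivAt_qx z).rpow_const (Or.inl hq0.ne')
  have hH := ((hsa.mul (hqe.mul (hasFDerivAt_coordy j z))).const_mul c)
  rw [show fderiv ℝ (fun w : Esp m × Esp n => c * (sf γ w ^ a * (qx w ^ e * w.2 j))) z = _ from hH.fderiv]
  simp [DS]
  ring


lemma abs_coord_le (x : Esp m) (i : Fin m) : |x i| ≤ ‖x‖ := by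
  have h := abs_real_inner_le_norm (EuclideanSpace.single i (1:ℝ)) x
  simpa [EuclideanSpace.inner_single_left] using h

/-- Case `z.1 = 0`: the inner factor of the flux has derivative zero. -/
lemma hasFDerivAt_flux_zero {e : ℝ} (he : 0 < e) (i : Fin m) {z : Esp m × Esp n}
    (hz1 : z.1 = 0) :
    HasFDerivAt (fun w : Esp m × Esp n => qx w ^ e * w.1 i)
      (0 : (Esp m × Esp n) →L[ℝ] ℝ) z := by
  rw [hasFDerivAt_iff_isLittleO_nhds_zero]
  rw [Asymptotics.isLittleO_iff]
  intro c hc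
  have htend : Filter.Tendsto (fun h : Esp m × Esp n => ‖h‖ ^ (2 * e)) (𝓝 0) (𝓝 0) := by
    have h1 : Filter.Tendsto (fun h : Esp m × Esp n => ‖h‖) (𝓝 0) (𝓝 0) := by
      simpa using (continuous_norm (E := Esp m × Esp n)).tendsto 0
    have h2 : ContinuousAt (fun t : ℝ => t ^ (2 * e)) 0 :=
      Real.continuousAt_rpow_const 0 (2 * e) (Or.inr (by positivity))
    have := h2.tendsto.comp h1
    simpa [Function.comp_def, Real.zero_rpow (by positivity : (2:ℝ) * e ≠ 0)] using this
  filter_upwards [htend.eventually_lt_const hc] with h hh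
  have hz1i : z.1 i = 0 := by rw [hz1]; rfl
  have hfst : (z + h).1 = h.1 := by rw [Prod.fst_add, hz1, zero_add]
  have hq : qx (z + h) = ‖h.1‖ ^ 2 := by unfold qx; rw [hfst]
  have hval : qx (z + h) ^ e * (z + h).1 i = (‖h.1‖ ^ (2*e)) * h.1 i := by
    rw [hq, hfst]
    congr 1
    rw [← Real.rpow_natCast ‖h.1‖ 2, ← Real.rpow_mul (norm_nonneg _)]
    norm_num
  have hb1 : ‖h.1‖ ≤ ‖h‖ := norm_fst_le h
  have hb2 : ‖h.1‖ ^ (2*e) ≤ ‖h‖ ^ (2*e) :=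
    Real.rpow_le_rpow (norm_nonneg _) hb1 (by positivity)
  have hb3 : |h.1 i| ≤ ‖h‖ := (abs_coord_le h.1 i).trans hb1
  simp only [hz1i, mul_zero, ContinuousLinearMap.zero_apply, sub_zero]
  rw [hval]
  have habs : ‖‖h.1‖ ^ (2*e) * h.1 i‖ = ‖h.1‖ ^ (2*e) * |h.1 i| := by
    rw [Real.norm_eq_abs, abs_mul, abs_of_nonneg (Real.rpow_nonneg (norm_nonneg _) _)]
  rw [habs]
  calc ‖h.1‖ ^ (2*e) * |h.1 i| ≤ ‖h‖ ^ (2*e) * ‖h‖ :=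
        mul_le_mul hb2 hb3 (abs_nonneg _) (Real.rpow_nonneg (norm_nonneg _) _)
    _ ≤ c * ‖h‖ := mul_le_mul_of_nonneg_right hh.le (norm_nonneg _)


lemma ggauge_pow (γ p Nγ : ℝ) {m n : ℕ} (hγ : 0 < γ) (hp1 : p ≠ 1) :
    (fun w : Esp m × Esp n => ggauge γ w ^ ((p - Nγ) / (p - 1))) =
      fun w => sf γ w ^ ((p - Nγ) / ((p - 1) * (2 * (γ + 1)))) := by
  funext w
  have h2 : ‖w.1‖ ^ (2 * (γ + 1)) = qx w ^ (γ + 1) := by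
    rw [show (2 : ℝ) * (γ + 1) = ((2:ℕ):ℝ) * (γ+1) by norm_num,
      Real.rpow_mul (norm_nonneg _), Real.rpow_natCast]
    rfl
  have hs : ggauge γ w = sf γ w ^ (1 / (2 * (γ + 1))) := by
    unfold ggauge sf qy; rw [h2]
  rw [hs, ← Real.rpow_mul (sf_nonneg hγ w)]
  congr 1
  have h3 : γ + 1 ≠ 0 := by linarith
  field_simp
end PFaux

open PFaux in
set_option maxHeartbeats 1000000 in
theorem pLap_fundamental_solution (m n : ℕ) (hm : 1 ≤ m) (hn : 1 ≤ n)
    (γ p : ℝ) (hγ : 0 < γ) (hp : 1 < p)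
    (Nγ : ℝ) (hNγ : Nγ = (m : ℝ) + (1 + γ) * n) (hpN : p < Nγ) (hne : p ≠ Nγ)
    (z : Esp m × Esp n) (hz : z ≠ 0) :
    pLap γ p (fun w => ggauge γ w ^ ((p - Nγ) / (p - 1))) z = 0 := by
  have hp1 : p - 1 ≠ 0 := by intro h; linarith
  have hγ1 : (0:ℝ) < γ + 1 := by linarith
  rw [ggauge_pow γ p Nγ hγ (by intro h; rw [h] at hp; exact lt_irrefl 1 hp)]
  set b : ℝ := (p - Nγ) / ((p - 1) * (2 * (γ + 1))) with hbdef
  set u : Esp m × Esp n → ℝ := fun w => sf γ w ^ b with hu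
  set r : ℝ := p - 2 with hrdef
  set C : ℝ := |2 * (γ + 1) * b| ^ r * (2 * (γ + 1) * b) with hCdef
  set a : ℝ := (b - 1/2) * r + (b - 1) with hadef
  set e : ℝ := γ * r / 2 + γ with hedef
  set e2 : ℝ := γ * r / 2 + γ / 2 with he2def
  have hepos : 0 < e := by rw [hedef, hrdef]; nlinarith
  have he2pos : 0 < e2 := by rw [he2def, hrdef]; nlinarith
  have hs0 : 0 < sf γ z := sf_pos hγ hz
  have hopen : ∀ᶠ w in 𝓝 z, w ≠ (0 : Esp m × Esp n) := by
    have : {w : Esp m × Esp n | w ≠ 0} ∈ 𝓝 z :=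
      isOpen_compl_singleton.mem_nhds (by simpa using hz)
    exact this
  -- rewrite each summand's fderiv via the closed form
  have hXinl : ∀ i : Fin m,
      Xop γ (Sum.inl i) (fun w => ‖ggrad γ u w‖ ^ (p - 2) * Xop γ (Sum.inl i) u w) z
        = fderiv ℝ (fun w => C * (sf γ w ^ a * (qx w ^ e * w.1 i))) z
            (EuclideanSpace.single i 1, 0) := by
    intro i
    show fderiv ℝ _ z _ = _
    congr 1
    apply Filter.EventuallyEq.fderiv_eq
    filter_upwards [hopen] with w hw
    rw [flux_inl (b := b) (r := r) hγ (by rw [← hedef]; exact hepos.ne') i hw]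
    rw [← hCdef, ← hadef, ← hedef]
    ring
  have hXinr : ∀ j : Fin n,
      Xop γ (Sum.inr j) (fun w => ‖ggrad γ u w‖ ^ (p - 2) * Xop γ (Sum.inr j) u w) z
        = ‖z.1‖ ^ γ * fderiv ℝ (fun w => (C * (γ+1)) * (sf γ w ^ a * (qx w ^ e2 * w.2 j))) z
            (0, EuclideanSpace.single j 1) := by
    intro j
    show ‖z.1‖ ^ γ * fderiv ℝ _ z _ = _
    congr 2
    apply Filter.EventuallyEq.fderiv_eq
    filter_upwards [hopen] with w hw
    rw [flux_inr (b := b) (r := r) hγ (by rw [← he2def]; exact he2pos.ne') j hw]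
    rw [← hCdef, ← hadef, ← he2def]
    ring
  show (∑ i : Fin m ⊕ Fin n, Xop γ i (fun w => ‖ggrad γ u w‖ ^ (p - 2) * Xop γ i u w) z) = 0
  rw [Fintype.sum_sum_type]
  simp only [hXinl, hXinr]
  rcases eq_or_ne z.1 0 with hz1 | hz1
  · -- degenerate case x = 0
    have hz1i : ∀ i : Fin m, z.1 i = 0 := fun i => by rw [hz1]; rfl
    have hnorm0 : ‖z.1‖ ^ γ = 0 := by rw [hz1, norm_zero, Real.zero_rpow hγ.ne']
    have hterm : ∀ i : Fin m,
        fderiv ℝ (fun w => C * (sf γ w ^ a * (qx w ^ e * w.1 i))) z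
          (EuclideanSpace.single i 1, 0) = 0 := by
      intro i
      have hfun : (fun w : Esp m × Esp n => C * (sf γ w ^ a * (qx w ^ e * w.1 i)))
          = fun w => (C * sf γ w ^ a) * (qx w ^ e * w.1 i) := funext fun w => by ring
      rw [hfun]
      have hD := ((hasFDerivAt_pow_sf hγ hz a).const_mul C).mul
        (hasFDerivAt_flux_zero hepos i hz1)
      rw [show fderiv ℝ (fun w : Esp m × Esp n => (C * sf γ w ^ a) * (qx w ^ e * w.1 i)) z = _ from hD.fderiv]
      simp [hz1i i]
    rw [Finset.sum_congr rfl (fun i _ => hterm i),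
      Finset.sum_congr rfl (fun (j : Fin n) _ => by rw [hnorm0, zero_mul] :
        ∀ j ∈ Finset.univ, ‖z.1‖ ^ γ *
          fderiv ℝ (fun w => (C * (γ+1)) * (sf γ w ^ a * (qx w ^ e2 * w.2 j))) z
            (0, EuclideanSpace.single j 1) = 0)]
    simp
  · -- main case x ≠ 0
    have hq0 : 0 < qx z := by
      have := norm_pos_iff.mpr hz1; unfold qx; positivity
    have hsum1 : ∑ i : Fin m,
        fderiv ℝ (fun w => C * (sf γ w ^ a * (qx w ^ e * w.1 i))) z
          (EuclideanSpace.single i 1, 0)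
        = (m : ℝ) * (C * (sf γ z ^ a * qx z ^ e))
          + (C * (2 * e * sf γ z ^ a * qx z ^ (e-1)
              + 2 * a * (γ+1) * sf γ z ^ (a-1) * qx z ^ e * qx z ^ γ)) * qx z := by
      rw [Finset.sum_congr rfl (fun i _ => fderiv_flux_inl hγ i hz hz1)]
      rw [Finset.sum_congr rfl (fun i _ => by ring :
        ∀ i ∈ Finset.univ, C * (sf γ z ^ a * qx z ^ e
          + (z.1 i)^2 * (2 * e * sf γ z ^ a * qx z ^ (e-1)
            + 2 * a * (γ+1) * sf γ z ^ (a-1) * qx z ^ e * qx z ^ γ))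
          = C * (sf γ z ^ a * qx z ^ e)
            + (C * (2 * e * sf γ z ^ a * qx z ^ (e-1)
              + 2 * a * (γ+1) * sf γ z ^ (a-1) * qx z ^ e * qx z ^ γ)) * (z.1 i)^2)]
      rw [Finset.sum_add_distrib, Finset.sum_const, ← Finset.mul_sum, sum_sq_x]
      simp only [Finset.card_univ, Fintype.card_fin, nsmul_eq_mul]
      rw [show ‖z.1‖^2 = qx z from rfl]
    have hsum2 : ∑ j : Fin n, ‖z.1‖ ^ γ *
        fderiv ℝ (fun w => (C * (γ+1)) * (sf γ w ^ a * (qx w ^ e2 * w.2 j))) z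
          (0, EuclideanSpace.single j 1)
        = qx z ^ (γ/2) * ((n : ℝ) * ((C * (γ+1)) * (sf γ z ^ a * qx z ^ e2))
          + ((C * (γ+1)) * (2 * a * (γ+1)^2 * sf γ z ^ (a-1) * qx z ^ e2)) * qy z) := by
      rw [Finset.sum_congr rfl (fun j _ => by
        rw [fderiv_flux_inr hγ j hz hz1, norm_sq_x hγ])]
      rw [Finset.sum_congr rfl (fun j _ => by ring :
        ∀ j ∈ Finset.univ, qx z ^ (γ/2) * ((C * (γ+1)) * (sf γ z ^ a * qx z ^ e2
          + (z.2 j)^2 * (2 * a * (γ+1)^2 * sf γ z ^ (a-1) * qx z ^ e2)))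
          = qx z ^ (γ/2) * ((C * (γ+1)) * (sf γ z ^ a * qx z ^ e2))
            + (qx z ^ (γ/2) * ((C * (γ+1)) * (2 * a * (γ+1)^2 * sf γ z ^ (a-1) * qx z ^ e2)))
              * (z.2 j)^2)]
      rw [Finset.sum_add_distrib, Finset.sum_const, ← Finset.mul_sum]
      have hqy : ∑ j : Fin n, (z.2 j)^2 = qy z := sum_sq_x z.2
      rw [hqy]
      simp only [Finset.card_univ, Fintype.card_fin, nsmul_eq_mul]
      ring
    rw [hsum1, hsum2]
    -- algebraic endgame
    have g1 : sf γ z ^ a = sf γ z ^ (a-1) * sf γ z := by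
      rw [← Real.rpow_add_one hs0.ne' (a-1)]; norm_num
    have g2 : qx z ^ e = qx z ^ (e-1) * qx z := by
      rw [← Real.rpow_add_one hq0.ne' (e-1)]; norm_num
    have g3 : qx z ^ (γ/2) * qx z ^ e2 = qx z ^ (e-1) * qx z := by
      rw [← Real.rpow_add hq0, show γ/2 + e2 = e by rw [hedef, he2def]; ring]
      exact g2
    have g6 : qx z * qx z ^ γ = sf γ z - (γ+1)^2 * qy z := by
      have g5 : qx z * qx z ^ γ = qx z ^ (γ+1) := by
        rw [Real.rpow_add' (qx_nonneg z) (by positivity : γ + 1 ≠ 0), Real.rpow_one]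
        ring
      have f4 : qx z ^ (γ+1) + (γ+1)^2 * qy z = sf γ z := rfl
      rw [g5]; linarith
    have hbmul : b * ((p - 1) * (2 * (γ + 1))) = p - Nγ := by
      rw [hbdef]
      field_simp
    have hK : 2*a*(γ+1) + 2*e + (m:ℝ) + (γ+1)*n = 0 := by
      rw [hadef, hedef, hrdef]
      linear_combination hbmul - hNγ
    rw [g1, g2]
    linear_combination ((C * (sf γ z ^ (a-1)) * ((n:ℝ) * sf γ z
        + 2*a*(γ+1)^2 * qy z)) * (γ+1)) * g3
      + (C * (sf γ z ^ (a-1)) * (qx z ^ (e-1)) * 2*a*(γ+1) * qx z) * g6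
      + (C * (sf γ z ^ (a-1)) * (qx z ^ (e-1)) * qx z * sf γ z) * hK
end
end

section
/- Let ν be a positive finite Borel measure on ℝ^N with total mass ‖ν‖ > 0 such that ν(Ω)^{1/p*_γ} · ν(ℝ^N)^{1/N_γ} ≤ ν(Ω)^{1/p} for every open set Ω ⊆ ℝ^N, where 1/p = 1/p*_γ + 1/N_γ. Then ν is concentrated at a single point, i.e., there exists z₀ such that ν = ‖ν‖ δ_{z₀}. -/
open MeasureTheory

theorem measure_concentrated_at_point (N : ℕ) (p Nγ pst : ℝ) (hp : 1 < p) (hpN : p < Nγ)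
    (hpst : pst = p * Nγ / (Nγ - p)) (hrel : 1 / p = 1 / pst + 1 / Nγ)
    (ν : Measure (EuclideanSpace ℝ (Fin N))) [IsFiniteMeasure ν]
    (hν0 : ν Set.univ ≠ 0)
    (h : ∀ Ω : Set (EuclideanSpace ℝ (Fin N)), IsOpen Ω →
      (ν Ω) ^ (1 / pst) * (ν Set.univ) ^ (1 / Nγ) ≤ (ν Ω) ^ (1 / p)) :
    ∃ z₀, ν = (ν Set.univ) • Measure.dirac z₀ := by
  have hNγ : 0 < Nγ := by linarith
  have hpst0 : 0 < pst := by
    rw [hpst]; exact div_pos (by nlinarith) (by linarith)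
  -- dichotomy: every open set with positive measure is full
  have key : ∀ Ω : Set (EuclideanSpace ℝ (Fin N)), IsOpen Ω → ν Ω ≠ 0 →
      ν Ω = ν Set.univ := by
    intro Ω hΩ hne
    have hfin : ν Ω ≠ ⊤ := measure_ne_top ν Ω
    have hle := h Ω hΩ
    rw [hrel, ENNReal.rpow_add _ _ hne hfin] at hle
    have h1 : (ν Ω) ^ (1 / pst) ≠ 0 :=
      (ENNReal.rpow_pos (pos_iff_ne_zero.mpr hne) hfin).ne'
    have h2 : (ν Ω) ^ (1 / pst) ≠ ⊤ :=
      ENNReal.rpow_ne_top_of_nonneg (by positivity) hfin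
    have hle2 : (ν Set.univ) ^ (1 / Nγ) ≤ (ν Ω) ^ (1 / Nγ) :=
      (ENNReal.mul_le_mul_iff_right h1 h2).mp hle
    have : ν Set.univ ≤ ν Ω :=
      (ENNReal.rpow_le_rpow_iff (by positivity : (0:ℝ) < 1 / Nγ)).mp hle2
    exact le_antisymm (measure_mono (Set.subset_univ _)) this
  -- find a point all of whose neighborhoods have positive measure
  obtain ⟨x, -, hx⟩ := MeasureTheory.exists_mem_forall_mem_nhdsWithin_pos_measure
    (μ := ν) (s := Set.univ) hν0
  simp only [nhdsWithin_univ] at hx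
  -- ν ({x}ᶜ) = 0
  have hxc : ν {x}ᶜ = 0 := by
    by_contra hne
    obtain ⟨y, hy, hy'⟩ :=
      MeasureTheory.exists_mem_forall_mem_nhdsWithin_pos_measure (μ := ν) hne
    have hxy : x ≠ y := fun e => hy (by simp [e])
    set r := dist x y / 2 with hr
    have hrpos : 0 < r := by
      have : 0 < dist x y := dist_pos.mpr hxy
      positivity
    have hdisj : Disjoint (Metric.ball x r) (Metric.ball y r) := by
      apply Metric.ball_disjoint_ball
      rw [hr]; linarith
    have hb1 : ν (Metric.ball x r) = ν Set.univ :=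
      key _ Metric.isOpen_ball (hx _ (Metric.ball_mem_nhds x hrpos)).ne'
    have hb2 : ν (Metric.ball y r) = ν Set.univ := by
      apply key _ Metric.isOpen_ball
      have : 0 < ν (Metric.ball y r ∩ {x}ᶜ) := by
        apply hy'
        rw [Set.inter_comm]
        exact inter_mem_nhdsWithin _ (Metric.ball_mem_nhds y hrpos)
      exact (lt_of_lt_of_le this (measure_mono Set.inter_subset_left)).ne'
    have hsum : ν (Metric.ball x r) + ν (Metric.ball y r) ≤ ν Set.univ := by
      rw [← measure_union hdisj Metric.isOpen_ball.measurableSet]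
      exact measure_mono (Set.subset_univ _)
    rw [hb1, hb2] at hsum
    have hfin : ν Set.univ ≠ ⊤ := measure_ne_top ν _
    exact absurd hsum (ENNReal.lt_add_right hfin hν0).not_ge
  refine ⟨x, Measure.ext fun s hs => ?_⟩
  rw [Measure.smul_apply, Measure.dirac_apply' _ hs, smul_eq_mul]
  by_cases hxs : x ∈ s
  · have : ν sᶜ = 0 := measure_mono_null (by simpa using hxs) hxc
    have h1 : ν s = ν Set.univ := by
      have h2 := measure_add_measure_compl (μ := ν) hs
      rw [this, add_zero] at h2
      exact h2
    simp [h1, Set.indicator_of_mem hxs]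
  · have : ν s = 0 := measure_mono_null (fun z hz => by
      simp only [Set.mem_compl_iff, Set.mem_singleton_iff]
      rintro rfl; exact hxs hz) hxc
    simp [this, Set.indicator_of_notMem hxs]
end

section
/- (Elementary inequality for comparison principle, case p ≥ 2.) For any two positive weakly differentiable functions u, v on a domain Ω (differentiability with respect to the Grushin gradient ∇_γ), one has pointwise: |∇_γ u|^{p−2}∇_γ u·∇_γ(u − v^p u^{1−p}) + |∇_γ v|^{p−2}∇_γ v·∇_γ(v − u^p v^{1−p}) ≥ C_p (u^p + v^p)|∇_γ log u − ∇_γ log v|^p, for a constant C_p > 0 depending only on p. -/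
open MeasureTheory Real Filter Topology

noncomputable section

open scoped NNReal

section AuxAlgebra

variable {E : Type*} [NormedAddCommGroup E] [InnerProductSpace ℝ E]

lemma young_aux {p x y : ℝ} (hp : 1 < p) (hx : 0 ≤ x) (hy : 0 ≤ y) :
    p * (x * y ^ (p - 1)) ≤ x ^ p + (p - 1) * y ^ p := by
  have hp0 : 0 < p := by linarith
  have h := Real.geom_mean_le_arith_mean2_weighted (by positivity : (0:ℝ) ≤ 1/p)
    (by rw [sub_nonneg, div_le_one hp0]; linarith : (0:ℝ) ≤ 1 - 1/p)
    (by positivity : (0:ℝ) ≤ x ^ p) (by positivity : (0:ℝ) ≤ y ^ p)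
    (by ring)
  have h1 : (x ^ p) ^ (1/p) = x := by
    rw [← Real.rpow_mul hx, mul_one_div, div_self (ne_of_gt hp0), Real.rpow_one]
  have h2 : (y ^ p) ^ (1 - 1/p) = y ^ (p - 1) := by
    rw [← Real.rpow_mul hy]
    congr 1
    field_simp
  rw [h1, h2] at h
  have := mul_le_mul_of_nonneg_left h (le_of_lt hp0)
  calc p * (x * y ^ (p-1)) ≤ p * (1/p * x^p + (1-1/p) * y^p) := this
    _ = x ^ p + (p-1) * y ^ p := by field_simp

lemma rpow_peel1 {t p : ℝ} (ht : 0 ≤ t) (hp : 2 ≤ p) : t ^ (p-2) * t = t ^ (p-1) := by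
  rcases eq_or_lt_of_le ht with h | h
  · rw [← h, Real.zero_rpow (by linarith : p - 1 ≠ 0), mul_zero]
  · rw [← Real.rpow_add_one (ne_of_gt h)]
    congr 1
    ring

lemma rpow_peel2 {t p : ℝ} (ht : 0 ≤ t) (hp : 2 ≤ p) : t ^ (p-2) * (t * t) = t ^ p := by
  have : t ^ (p-2) * (t * t) = (t ^ (p-2) * t) * t := by ring
  rw [this, rpow_peel1 ht hp]
  rcases eq_or_lt_of_le ht with h | h
  · rw [← h, Real.zero_rpow (by linarith : p - 1 ≠ 0), zero_mul,
      Real.zero_rpow (by linarith : p ≠ 0)]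
  · nth_rewrite 2 [← Real.rpow_one t]
    rw [← Real.rpow_add h]
    norm_num

variable {E : Type*} [NormedAddCommGroup E] [InnerProductSpace ℝ E]

lemma grad_ineq {p : ℝ} (hp : 2 ≤ p) (a b : E) :
    ‖b‖ ^ p + p * ‖b‖ ^ (p-2) * (inner ℝ b (a - b) : ℝ) ≤ ‖a‖ ^ p := by
  have hp1 : (1:ℝ) < p := by linarith
  have hb : (0:ℝ) ≤ ‖b‖ := norm_nonneg b
  have ha : (0:ℝ) ≤ ‖a‖ := norm_nonneg a
  have hbp : (0:ℝ) ≤ ‖b‖ ^ (p-2) := Real.rpow_nonneg hb _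
  have hsub : (inner ℝ b (a - b) : ℝ) = (inner ℝ b a : ℝ) - ‖b‖ * ‖b‖ := by
    rw [inner_sub_right, real_inner_self_eq_norm_mul_norm]
  have hcs : (inner ℝ b a : ℝ) ≤ ‖b‖ * ‖a‖ := real_inner_le_norm b a
  have key : ‖b‖ ^ (p-2) * (inner ℝ b a : ℝ) ≤ ‖a‖ * ‖b‖ ^ (p-1) := by
    calc ‖b‖ ^ (p-2) * (inner ℝ b a : ℝ) ≤ ‖b‖ ^ (p-2) * (‖b‖ * ‖a‖) :=
          mul_le_mul_of_nonneg_left hcs hbp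
      _ = (‖b‖ ^ (p-2) * ‖b‖) * ‖a‖ := by ring
      _ = ‖a‖ * ‖b‖ ^ (p-1) := by rw [rpow_peel1 hb hp]; ring
  have hy := young_aux hp1 ha hb
  have h2 : ‖b‖ ^ (p-2) * (‖b‖ * ‖b‖) = ‖b‖ ^ p := rpow_peel2 hb hp
  have hkey : p * (‖b‖ ^ (p-2) * (inner ℝ b a : ℝ)) ≤ p * (‖a‖ * ‖b‖ ^ (p-1)) :=
    mul_le_mul_of_nonneg_left key (by linarith)
  rw [hsub]
  have expand : ‖b‖ ^ p + p * ‖b‖ ^ (p-2) * ((inner ℝ b a : ℝ) - ‖b‖ * ‖b‖)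
      = ‖b‖ ^ p + p * (‖b‖ ^ (p-2) * (inner ℝ b a : ℝ)) - p * (‖b‖ ^ (p-2) * (‖b‖ * ‖b‖)) := by
    ring
  rw [expand, h2]
  linarith

lemma two_convex {q z1 z2 : ℝ} (hq : 1 ≤ q) (h1 : 0 ≤ z1) (h2 : 0 ≤ z2) :
    (z1 + z2) ^ q ≤ 2 ^ (q-1) * (z1 ^ q + z2 ^ q) := by
  lift z1 to ℝ≥0 using h1
  lift z2 to ℝ≥0 using h2
  have h := NNReal.rpow_add_le_mul_rpow_add_rpow z1 z2 hq
  have := NNReal.coe_le_coe.2 h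
  push_cast at this
  convert this using 3 <;> norm_num

lemma lp_le_l2 {p x y : ℝ} (hp : 2 ≤ p) (hx : 0 ≤ x) (hy : 0 ≤ y) :
    x ^ p + y ^ p ≤ (x ^ (2:ℝ) + y ^ (2:ℝ)) ^ (p/2) := by
  have hp0 : (0:ℝ) < p := by linarith
  lift x to ℝ≥0 using hx
  lift y to ℝ≥0 using hy
  have h := NNReal.rpow_add_rpow_le x y (by norm_num : (0:ℝ) < 2) hp
  have h2 := NNReal.rpow_le_rpow h (le_of_lt hp0)
  rw [← NNReal.rpow_mul, ← NNReal.rpow_mul] at h2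
  rw [one_div_mul_cancel (ne_of_gt hp0), NNReal.rpow_one] at h2
  have he : 1 / 2 * p = p / 2 := by ring
  rw [he] at h2
  have := NNReal.coe_le_coe.2 h2
  push_cast at this
  exact this

lemma clarkson {p : ℝ} (hp : 2 ≤ p) (x y : E) :
    ‖x + y‖ ^ p + ‖x - y‖ ^ p ≤ 2 ^ (p-1) * (‖x‖ ^ p + ‖y‖ ^ p) := by
  have hq : (1:ℝ) ≤ p/2 := by linarith
  have par : ‖x+y‖ ^ (2:ℝ) + ‖x-y‖ ^ (2:ℝ) = 2*‖x‖^(2:ℝ) + 2*‖y‖^(2:ℝ) := by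
    have h := parallelogram_law_with_norm ℝ x y
    rw [Real.rpow_two, Real.rpow_two, Real.rpow_two, Real.rpow_two]
    nlinarith [h]
  have step1 : ‖x+y‖ ^ p + ‖x-y‖ ^ p ≤ (2*‖x‖^(2:ℝ) + 2*‖y‖^(2:ℝ)) ^ (p/2) := by
    rw [← par]
    exact lp_le_l2 hp (norm_nonneg _) (norm_nonneg _)
  have h1 : (0:ℝ) ≤ 2*‖x‖^(2:ℝ) := by positivity
  have h2 : (0:ℝ) ≤ 2*‖y‖^(2:ℝ) := by positivity
  have step2 := two_convex hq h1 h2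
  have hmul : ∀ t : ℝ, 0 ≤ t → (2*t^(2:ℝ)) ^ (p/2) = 2^(p/2) * t^p := by
    intro t ht
    rw [Real.mul_rpow (by norm_num) (by positivity), ← Real.rpow_mul ht]
    have : (2:ℝ)*(p/2) = p := by ring
    rw [this]
  rw [hmul _ (norm_nonneg x), hmul _ (norm_nonneg y)] at step2
  have hcomb : 2^(p/2-1) * (2^(p/2) * ‖x‖^p + 2^(p/2) * ‖y‖^p)
      = 2^(p-1) * (‖x‖^p + ‖y‖^p) := by
    have : (2:ℝ)^(p/2-1) * 2^(p/2) = 2^(p-1) := by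
      rw [← Real.rpow_add (by norm_num : (0:ℝ) < 2)]
      congr 1
      ring
    calc 2^(p/2-1) * (2^(p/2) * ‖x‖^p + 2^(p/2) * ‖y‖^p)
        = (2^(p/2-1) * 2^(p/2)) * (‖x‖^p + ‖y‖^p) := by ring
      _ = 2^(p-1) * (‖x‖^p + ‖y‖^p) := by rw [this]
  linarith [step1, step2, hcomb.le, hcomb.ge]

lemma strong_conv {p : ℝ} (hp : 2 ≤ p) (ξ η : E) :
    ‖η‖ ^ p + p * ‖η‖ ^ (p-2) * (inner ℝ η (ξ - η) : ℝ) + 2^(1-p) * ‖ξ - η‖ ^ p ≤ ‖ξ‖ ^ p := by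
  set m : E := (2:ℝ)⁻¹ • (ξ + η) with hm
  have hmd : m - η = (2:ℝ)⁻¹ • (ξ - η) := by
    rw [hm]
    module
  have hinner : (inner ℝ η (m - η) : ℝ) = (2:ℝ)⁻¹ * (inner ℝ η (ξ - η) : ℝ) := by
    rw [hmd, real_inner_smul_right]
  have hA := grad_ineq hp m η
  rw [hinner] at hA
  have hnm : ‖m‖ ^ p = 2^(-p) * ‖ξ + η‖ ^ p := by
    rw [hm, norm_smul]
    rw [Real.mul_rpow (by positivity) (norm_nonneg _)]
    congr 1
    rw [Real.norm_eq_abs, abs_of_pos (by norm_num : (0:ℝ) < 2⁻¹), ← Real.rpow_neg_one (2:ℝ),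
      ← Real.rpow_mul (by norm_num : (0:ℝ) ≤ 2)]
    congr 1
    ring
  have hC := clarkson hp ξ η
  -- from clarkson: 2^(1-p) * (‖ξ+η‖^p + ‖ξ-η‖^p) ≤ ‖ξ‖^p + ‖η‖^p
  have h2p : (0:ℝ) < 2^(p-1) := Real.rpow_pos_of_pos (by norm_num) _
  have hCl : 2^(1-p) * (‖ξ+η‖^p + ‖ξ-η‖^p) ≤ ‖ξ‖^p + ‖η‖^p := by
    have hinv : (2:ℝ)^(1-p) = (2^(p-1))⁻¹ := by
      rw [← Real.rpow_neg (by norm_num : (0:ℝ) ≤ 2)]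
      congr 1
      ring
    rw [hinv, inv_mul_le_iff₀ h2p]
    linarith [hC]
  -- 2^(1-p)*‖ξ+η‖^p = 2*‖m‖^p
  have hmid : 2^(1-p) * ‖ξ+η‖^p = 2 * ‖m‖^p := by
    rw [hnm]
    rw [show (1:ℝ)-p = 1 + -p by ring, Real.rpow_add (by norm_num : (0:ℝ) < 2),
      Real.rpow_one]
    ring
  -- grad: ‖m‖^p ≥ ‖η‖^p + (p/2)‖η‖^{p-2}⟪η,ξ-η⟫
  nlinarith [hA, hCl, hmid]

lemma bracket {p : ℝ} (hp : 2 ≤ p) (ξ η : E) :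
    2^(1-p) * ‖ξ - η‖ ^ p ≤ ‖ξ‖ ^ p + (p-1) * ‖η‖ ^ p - p * ‖η‖ ^ (p-2) * (inner ℝ η ξ : ℝ) := by
  have h := strong_conv hp ξ η
  have hsub : (inner ℝ η (ξ - η) : ℝ) = (inner ℝ η ξ : ℝ) - ‖η‖ * ‖η‖ := by
    rw [inner_sub_right, real_inner_self_eq_norm_mul_norm]
  rw [hsub] at h
  have h2 : ‖η‖ ^ (p-2) * (‖η‖ * ‖η‖) = ‖η‖ ^ p := rpow_peel2 (norm_nonneg η) hp
  nlinarith [h, h2]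

set_option maxHeartbeats 2000000 in
lemma term_eq {p : ℝ} (hp : 2 ≤ p) {a b : ℝ} (ha : 0 < a) (hb : 0 < b) (ξ η : E) :
    ‖a • ξ‖ ^ (p-2) *
      (inner ℝ (a • ξ) ((1 - (1-p)*b^p*a^(-p)) • (a • ξ) + (-(p*b^(p-1)*a^(1-p))) • (b • η)) : ℝ)
    = a^p * ‖ξ‖^p + b^p * ((p-1) * ‖ξ‖^p - p * ‖ξ‖^(p-2) * (inner ℝ ξ η : ℝ)) := by
  have hna : ‖a • ξ‖ = a * ‖ξ‖ := by
    rw [norm_smul, Real.norm_eq_abs, abs_of_pos ha]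
  have hnp : ‖a • ξ‖ ^ (p-2) = a^(p-2) * ‖ξ‖^(p-2) := by
    rw [hna, Real.mul_rpow (le_of_lt ha) (norm_nonneg ξ)]
  have hin : (inner ℝ (a • ξ) ((1 - (1-p)*b^p*a^(-p)) • (a • ξ) + (-(p*b^(p-1)*a^(1-p))) • (b • η)) : ℝ)
      = a * ((1 - (1-p)*b^p*a^(-p)) * (a * (‖ξ‖ * ‖ξ‖)) + (-(p*b^(p-1)*a^(1-p))) * (b * (inner ℝ ξ η : ℝ))) := by
    simp only [inner_add_right, real_inner_smul_left, real_inner_smul_right,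
      real_inner_self_eq_norm_mul_norm, hna]
    ring
  rw [hnp, hin]
  have h1 : a^(p-2) * (a*a) = a^p := rpow_peel2 (le_of_lt ha) hp
  have h2 : a^(p-2) * (a*a) * a^(-p) = 1 := by
    rw [h1, ← Real.rpow_add ha]
    simp
  have h3 : a^(p-2) * a * a^(1-p) = 1 := by
    rw [rpow_peel1 (le_of_lt ha) hp, ← Real.rpow_add ha]
    simp
  have h4 : b^(p-1) * b = b^p := by
    rw [← Real.rpow_add_one (ne_of_gt hb)]
    congr 1
    ring
  have h5 : ‖ξ‖^(p-2) * (‖ξ‖*‖ξ‖) = ‖ξ‖^p := rpow_peel2 (norm_nonneg ξ) hp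
  set A2 := a^(p-2) with hA2
  set Ap := a^p with hAp
  set An := a^(-p) with hAn
  set A1 := a^(1-p) with hA1
  set B1 := b^(p-1) with hB1
  set Bp := b^p with hBp
  set N2 := ‖ξ‖^(p-2) with hN2
  set Np := ‖ξ‖^p with hNp
  linear_combination (N2 * (‖ξ‖*‖ξ‖)) * h1 + Ap * h5
    + ((p-1) * Bp * (N2 * (‖ξ‖*‖ξ‖))) * h2 + ((p-1) * Bp) * h5
    + (-(p * N2 * (inner ℝ ξ η : ℝ) * b * B1)) * h3
    + (-(p * N2 * (inner ℝ ξ η : ℝ))) * h4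

lemma key_algebra {p : ℝ} (hp : 2 ≤ p) {a b : ℝ} (ha : 0 < a) (hb : 0 < b) (ξ η : E) :
    ‖a • ξ‖ ^ (p-2) *
      (inner ℝ (a • ξ) ((1 - (1-p)*b^p*a^(-p)) • (a • ξ) + (-(p*b^(p-1)*a^(1-p))) • (b • η)) : ℝ)
    + ‖b • η‖ ^ (p-2) *
      (inner ℝ (b • η) ((1 - (1-p)*a^p*b^(-p)) • (b • η) + (-(p*a^(p-1)*b^(1-p))) • (a • ξ)) : ℝ)
    ≥ 2^(1-p) * (a^p + b^p) * ‖ξ - η‖ ^ p := by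
  rw [term_eq hp ha hb ξ η, term_eq hp hb ha η ξ]
  have hbr1 := bracket hp ξ η
  have hbr2 := bracket hp η ξ
  rw [norm_sub_rev η ξ] at hbr2
  have hap : (0:ℝ) ≤ a^p := Real.rpow_nonneg (le_of_lt ha) p
  have hbp : (0:ℝ) ≤ b^p := Real.rpow_nonneg (le_of_lt hb) p
  have hc1 := mul_le_mul_of_nonneg_left hbr1 hap
  have hc2 := mul_le_mul_of_nonneg_left hbr2 hbp
  have hcomm : (inner ℝ ξ η : ℝ) = (inner ℝ η ξ : ℝ) := real_inner_comm η ξ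
  nlinarith [hc1, hc2]


end AuxAlgebra

lemma ggrad_comb (γ : ℝ) {m n : ℕ} (f u v : Esp m × Esp n → ℝ) (z : Esp m × Esp n)
    (c₁ c₂ : ℝ)
    (hf : HasFDerivAt f (c₁ • fderiv ℝ u z + c₂ • fderiv ℝ v z) z) :
    ggrad γ f z = c₁ • ggrad γ u z + c₂ • ggrad γ v z := by
  have hD : fderiv ℝ f z = c₁ • fderiv ℝ u z + c₂ • fderiv ℝ v z := hf.fderiv
  ext i
  show Xop γ i f z = (c₁ • ggrad γ u z + c₂ • ggrad γ v z) i
  have : (c₁ • ggrad γ u z + c₂ • ggrad γ v z) i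
      = c₁ * Xop γ i u z + c₂ * Xop γ i v z := by
    simp [ggrad, toE, PiLp.add_apply, PiLp.smul_apply, smul_eq_mul]
  rw [this]
  cases i with
  | inl i => simp [Xop, hD]
  | inr j => simp [Xop, hD]; ring

theorem elementary_comparison_inequality (m n : ℕ) (hm : 1 ≤ m) (hn : 1 ≤ n)
    (γ p : ℝ) (hγ : 0 < γ) (hp : 2 ≤ p) :
    ∃ C > (0:ℝ), ∀ (Ω : Set (Esp m × Esp n)), IsOpen Ω →
      ∀ u v : Esp m × Esp n → ℝ,
      (∀ z ∈ Ω, 0 < u z) → (∀ z ∈ Ω, 0 < v z) →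
      (∀ z ∈ Ω, DifferentiableAt ℝ u z) → (∀ z ∈ Ω, DifferentiableAt ℝ v z) →
      ∀ z ∈ Ω,
        ‖ggrad γ u z‖ ^ (p - 2) *
          (inner ℝ (ggrad γ u z)
            (ggrad γ (fun w => u w - v w ^ p * u w ^ (1 - p)) z) : ℝ) +
        ‖ggrad γ v z‖ ^ (p - 2) *
          (inner ℝ (ggrad γ v z)
            (ggrad γ (fun w => v w - u w ^ p * v w ^ (1 - p)) z) : ℝ) ≥
        C * (u z ^ p + v z ^ p) *
          ‖ggrad γ (fun w => Real.log (u w)) z -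
            ggrad γ (fun w => Real.log (v w)) z‖ ^ p := by
  refine ⟨2^(1-p), Real.rpow_pos_of_pos (by norm_num) _, ?_⟩
  intro Ω hΩ u v hu hv hud hvd z hz
  have hu0 : 0 < u z := hu z hz
  have hv0 : 0 < v z := hv z hz
  have hU : HasFDerivAt u (fderiv ℝ u z) z := (hud z hz).hasFDerivAt
  have hV : HasFDerivAt v (fderiv ℝ v z) z := (hvd z hz).hasFDerivAt
  -- gradient of the first combined function
  have hg1 : ggrad γ (fun w => u w - v w ^ p * u w ^ (1-p)) z
      = (1 - (1-p) * v z ^ p * u z ^ (-p)) • ggrad γ u z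
        + (-(p * v z ^ (p-1) * u z ^ (1-p))) • ggrad γ v z := by
    apply ggrad_comb
    have hA : HasFDerivAt (fun w => v w ^ p) ((p * v z ^ (p-1)) • fderiv ℝ v z) z :=
      hV.rpow_const (Or.inl (ne_of_gt hv0))
    have hB : HasFDerivAt (fun w => u w ^ (1-p))
        (((1-p) * u z ^ (1-p-1)) • fderiv ℝ u z) z :=
      hU.rpow_const (Or.inl (ne_of_gt hu0))
    rw [show (1:ℝ)-p-1 = -p from by ring] at hB
    have hF := hU.sub (hA.mul hB)
    have heq : fderiv ℝ u z
        - (v z ^ p • (((1-p) * u z ^ (-p)) • fderiv ℝ u z)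
          + u z ^ (1-p) • ((p * v z ^ (p-1)) • fderiv ℝ v z))
        = (1 - (1-p) * v z ^ p * u z ^ (-p)) • fderiv ℝ u z
          + (-(p * v z ^ (p-1) * u z ^ (1-p))) • fderiv ℝ v z := by
      refine ContinuousLinearMap.ext fun w => ?_
      simp [ContinuousLinearMap.sub_apply, ContinuousLinearMap.add_apply,
        ContinuousLinearMap.smul_apply, smul_eq_mul]
      ring
    rw [heq] at hF
    exact hF
  have hg2 : ggrad γ (fun w => v w - u w ^ p * v w ^ (1-p)) z
      = (1 - (1-p) * u z ^ p * v z ^ (-p)) • ggrad γ v z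
        + (-(p * u z ^ (p-1) * v z ^ (1-p))) • ggrad γ u z := by
    apply ggrad_comb
    have hA : HasFDerivAt (fun w => u w ^ p) ((p * u z ^ (p-1)) • fderiv ℝ u z) z :=
      hU.rpow_const (Or.inl (ne_of_gt hu0))
    have hB : HasFDerivAt (fun w => v w ^ (1-p))
        (((1-p) * v z ^ (1-p-1)) • fderiv ℝ v z) z :=
      hV.rpow_const (Or.inl (ne_of_gt hv0))
    rw [show (1:ℝ)-p-1 = -p from by ring] at hB
    have hF := hV.sub (hA.mul hB)
    have heq : fderiv ℝ v z
        - (u z ^ p • (((1-p) * v z ^ (-p)) • fderiv ℝ v z)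
          + v z ^ (1-p) • ((p * u z ^ (p-1)) • fderiv ℝ u z))
        = (1 - (1-p) * u z ^ p * v z ^ (-p)) • fderiv ℝ v z
          + (-(p * u z ^ (p-1) * v z ^ (1-p))) • fderiv ℝ u z := by
      refine ContinuousLinearMap.ext fun w => ?_
      simp [ContinuousLinearMap.sub_apply, ContinuousLinearMap.add_apply,
        ContinuousLinearMap.smul_apply, smul_eq_mul]
      ring
    rw [heq] at hF
    exact hF
  have hglu : ggrad γ (fun w => Real.log (u w)) z = (u z)⁻¹ • ggrad γ u z := by
    have h := ggrad_comb γ (fun w => Real.log (u w)) u v z (u z)⁻¹ 0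
      (by simpa using hU.log (ne_of_gt hu0))
    simpa using h
  have hglv : ggrad γ (fun w => Real.log (v w)) z = (v z)⁻¹ • ggrad γ v z := by
    have h := ggrad_comb γ (fun w => Real.log (v w)) v u z (v z)⁻¹ 0
      (by simpa using hV.log (ne_of_gt hv0))
    simpa using h
  rw [hg1, hg2, hglu, hglv]
  set ξ := (u z)⁻¹ • ggrad γ u z with hξ
  set η := (v z)⁻¹ • ggrad γ v z with hη
  have hGu : ggrad γ u z = u z • ξ := (smul_inv_smul₀ (ne_of_gt hu0) _).symm
  have hGv : ggrad γ v z = v z • η := (smul_inv_smul₀ (ne_of_gt hv0) _).symm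
  rw [hGu, hGv]
  exact key_algebra hp hu0 hv0 ξ η
end
end
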